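/- Universal 4(d−1) bound for the oriented-edge adjacency operator (the reduction giving ‖Δ̃₁‖ ≤ 4(d−1) for d-regular graphs). Let G be a simple graph on a countable vertex type V in which every vertex has degree at most d, with d ≥ 1. Let E⃗ = {(x,y) ∈ V × V : x and y adjacent in G} and define A on ℓ²(E⃗) by (Af)(x,y) = ∑ f(u,v), the sum over all oriented edges (u,v) whose underlying unordered edge {u,v} is different from {x,y} and shares an endpoint with {x,y}. Then A is a well-defined bounded linear operator with ‖A‖ ≤ 4(d − 1). -/

import Mathlib

open scoped InnerProductSpace ComplexConjugate ENNReal NNReal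

/-- The set of oriented edges of a simple graph `G`. -/
def OrientedEdge {V : Type*} (G : SimpleGraph V) : Type _ :=
  {p : V × V // G.Adj p.1 p.2}

namespace OEBound

open Finset

variable {V : Type*} [DecidableEq V] (G : SimpleGraph V)

/-- The adjacency condition between oriented edges. -/
def Cond (e e' : OrientedEdge G) : Prop :=
  Sym2.mk e'.1.1 e'.1.2 ≠ Sym2.mk e.1.1 e.1.2 ∧ (e.1.1 ∈ Sym2.mk e'.1.1 e'.1.2 ∨ e.1.2 ∈ Sym2.mk e'.1.1 e'.1.2)

lemma cond_symm {e e' : OrientedEdge G} (h : Cond G e e') : Cond G e' e := by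
  obtain ⟨⟨x, y⟩, hxy⟩ := e
  obtain ⟨⟨u, v⟩, huv⟩ := e'
  obtain ⟨h1, h2⟩ := h
  simp only [Cond, Sym2.mem_iff] at h2 ⊢
  exact ⟨Ne.symm h1, by tauto⟩

variable [∀ v : V, Fintype (G.neighborSet v)]

/-- Candidate pairs underlying oriented edges adjacent to `e`. -/
def TSet (e : OrientedEdge G) : Finset (V × V) :=
  ((G.neighborFinset e.1.1).erase e.1.2).image (fun w => (e.1.1, w)) ∪
  ((G.neighborFinset e.1.1).erase e.1.2).image (fun w => (w, e.1.1)) ∪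
  ((G.neighborFinset e.1.2).erase e.1.1).image (fun w => (e.1.2, w)) ∪
  ((G.neighborFinset e.1.2).erase e.1.1).image (fun w => (w, e.1.2))

lemma mem_TSet {e e' : OrientedEdge G} (h : Cond G e e') : e'.1 ∈ TSet G e := by
  obtain ⟨⟨x, y⟩, hxy⟩ := e
  obtain ⟨⟨u, v⟩, huv⟩ := e'
  obtain ⟨h1, h2⟩ := h
  simp only [Sym2.mem_iff] at h2
  simp only [TSet, Finset.mem_union, Finset.mem_image, Finset.mem_erase,
    SimpleGraph.mem_neighborFinset]
  rcases h2 with (h | h) | (h | h)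
  · -- x = u
    subst h
    refine Or.inl (Or.inl (Or.inl ⟨v, ⟨?_, huv⟩, rfl⟩))
    rintro rfl; exact h1 rfl
  · -- x = v
    subst h
    refine Or.inl (Or.inl (Or.inr ⟨u, ⟨?_, huv.symm⟩, rfl⟩))
    rintro rfl; exact h1 (Sym2.eq_swap)
  · -- y = u
    subst h
    refine Or.inl (Or.inr ⟨v, ⟨?_, huv⟩, rfl⟩)
    rintro rfl; exact h1 (Sym2.eq_swap)
  · -- y = v
    subst h
    exact Or.inr ⟨u, ⟨fun hux => h1 (by subst hux; rfl), huv.symm⟩, rfl⟩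

lemma card_TSet_le {d : ℕ} (hdeg : ∀ v, G.degree v ≤ d) (e : OrientedEdge G) :
    (TSet G e).card ≤ 4 * (d - 1) := by
  obtain ⟨⟨x, y⟩, hxy⟩ := e
  have hx : ((G.neighborFinset x).erase y).card ≤ d - 1 := by
    rw [Finset.card_erase_of_mem (by simpa using hxy)]
    exact Nat.sub_le_sub_right (hdeg x) 1
  have hy : ((G.neighborFinset y).erase x).card ≤ d - 1 := by
    rw [Finset.card_erase_of_mem (by simpa using hxy.symm)]
    exact Nat.sub_le_sub_right (hdeg y) 1
  have h1 := Finset.card_image_le (s := (G.neighborFinset x).erase y)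
    (f := fun w => (x, w))
  have h2 := Finset.card_image_le (s := (G.neighborFinset x).erase y)
    (f := fun w => (w, x))
  have h3 := Finset.card_image_le (s := (G.neighborFinset y).erase x)
    (f := fun w => (y, w))
  have h4 := Finset.card_image_le (s := (G.neighborFinset y).erase x)
    (f := fun w => (w, y))
  unfold TSet
  refine le_trans (Finset.card_union_le _ _) (le_trans (add_le_add_left
    (le_trans (Finset.card_union_le _ _) (add_le_add_left
      (Finset.card_union_le _ _) _)) _) ?_)
  simp only []
  omega

lemma cond_finite (e : OrientedEdge G) : {e' : OrientedEdge G | Cond G e e'}.Finite := by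
  refine Set.Finite.subset (Set.Finite.preimage (f := fun e' : OrientedEdge G => e'.1)
    (Subtype.val_injective.injOn) (TSet G e).finite_toSet) ?_
  intro e' he'
  exact mem_TSet G he'

/-- The finite set of oriented edges adjacent to `e`. -/
noncomputable def Se (e : OrientedEdge G) : Finset (OrientedEdge G) :=
  (cond_finite G e).toFinset

lemma mem_Se {e e' : OrientedEdge G} : e' ∈ Se G e ↔ Cond G e e' :=
  Set.Finite.mem_toFinset _

lemma mem_Se_symm {e e' : OrientedEdge G} : e' ∈ Se G e ↔ e ∈ Se G e' := by
  simp only [mem_Se]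
  exact ⟨cond_symm G, cond_symm G⟩

lemma card_Se_le {d : ℕ} (hdeg : ∀ v, G.degree v ≤ d) (e : OrientedEdge G) :
    (Se G e).card ≤ 4 * (d - 1) := by
  refine le_trans (Finset.card_le_card_of_injOn (fun e' => e'.1)
    (fun a ha => mem_TSet G ((mem_Se (G:=G)).1 ha)) (fun a _ b _ h => Subtype.ext h)) ?_
  exact card_TSet_le G hdeg e

/-- The raw adjacency operator on functions. -/
noncomputable def gmap (f : OrientedEdge G → ℂ) (e : OrientedEdge G) : ℂ :=
  ∑ e' ∈ Se G e, f e'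

lemma key_sum_bound {d : ℕ} (hdeg : ∀ v, G.degree v ≤ d)
    (f : lp (fun _ : OrientedEdge G => ℂ) 2) (s : Finset (OrientedEdge G)) :
    ∑ e ∈ s, ‖gmap G (⇑f) e‖ ^ 2 ≤ (((4 * (d - 1) : ℕ) : ℝ) * ‖f‖) ^ 2 := by
  classical
  set N : ℝ := ((4 * (d - 1) : ℕ) : ℝ) with hN
  have hN0 : 0 ≤ N := Nat.cast_nonneg _
  have hsq : ∀ e : OrientedEdge G,
      ‖gmap G (⇑f) e‖ ^ 2 ≤ N * ∑ e' ∈ Se G e, ‖f e'‖ ^ 2 := by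
    intro e
    have h1 : ‖gmap G (⇑f) e‖ ≤ ∑ e' ∈ Se G e, ‖f e'‖ := norm_sum_le _ _
    have h2 : ‖gmap G (⇑f) e‖ ^ 2 ≤ (∑ e' ∈ Se G e, ‖f e'‖) ^ 2 := by
      have := norm_nonneg (gmap G (⇑f) e)
      nlinarith [Finset.sum_nonneg (fun e' (_ : e' ∈ Se G e) => norm_nonneg (f e'))]
    refine h2.trans ((sq_sum_le_card_mul_sum_sq).trans ?_)
    have hcard : ((Se G e).card : ℝ) ≤ N := by
      rw [hN]; exact_mod_cast card_Se_le G hdeg e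
    exact mul_le_mul_of_nonneg_right hcard
      (Finset.sum_nonneg fun e' _ => sq_nonneg _)
  have main : ∑ e ∈ s, ∑ e' ∈ Se G e, ‖f e'‖ ^ 2 ≤ N * ‖f‖ ^ 2 := by
    set t : Finset (OrientedEdge G) := s.biUnion (fun e => Se G e) with ht
    have hsub : ∀ e ∈ s, Se G e ⊆ t := fun e he => Finset.subset_biUnion_of_mem _ he
    have step1 : ∑ e ∈ s, ∑ e' ∈ Se G e, ‖f e'‖ ^ 2
        = ∑ e ∈ s, ∑ e' ∈ t, if e' ∈ Se G e then ‖f e'‖ ^ 2 else 0 := by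
      refine Finset.sum_congr rfl fun e he => ?_
      rw [Finset.sum_ite_mem, Finset.inter_eq_right.2 (hsub e he)]
    have step2 : ∀ e' ∈ t, (∑ e ∈ s, if e' ∈ Se G e then ‖f e'‖ ^ 2 else 0)
        ≤ N * ‖f e'‖ ^ 2 := by
      intro e' _
      have : (∑ e ∈ s, if e' ∈ Se G e then ‖f e'‖ ^ 2 else 0)
          = (s ∩ Se G e').card * ‖f e'‖ ^ 2 := by
        have : ∀ e, (if e' ∈ Se G e then ‖f e'‖ ^ 2 else 0)
            = if e ∈ Se G e' then ‖f e'‖ ^ 2 else 0 := by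
          intro e
          by_cases h : e' ∈ Se G e
          · rw [if_pos h, if_pos ((mem_Se_symm (G:=G)).1 h)]
          · rw [if_neg h, if_neg (fun hc => h ((mem_Se_symm (G:=G)).2 hc))]
        simp_rw [this]
        rw [Finset.sum_ite_mem, Finset.sum_const, nsmul_eq_mul]
      rw [this]
      refine mul_le_mul_of_nonneg_right ?_ (sq_nonneg _)
      have h1 : (s ∩ Se G e').card ≤ (Se G e').card :=
        Finset.card_le_card (Finset.inter_subset_right)
      have h2 := card_Se_le G hdeg e'
      rw [hN]; exact_mod_cast h1.trans h2
    have step3 : ∑ e' ∈ t, ‖f e'‖ ^ 2 ≤ ‖f‖ ^ 2 := by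
      have h := lp.sum_rpow_le_norm_rpow (p := 2)
        (by norm_num : (0:ℝ) < (2 : ℝ≥0∞).toReal) f t
      have h2 : ((2 : ℝ≥0∞).toReal) = (2 : ℝ) := by norm_num
      rw [h2] at h
      have hr : ∀ x : ℝ, x ^ (2:ℝ) = x ^ 2 := fun x => by
        rw [show (2:ℝ) = ((2:ℕ):ℝ) by norm_num, Real.rpow_natCast]
      simp only [hr] at h
      exact h
    calc ∑ e ∈ s, ∑ e' ∈ Se G e, ‖f e'‖ ^ 2
        = ∑ e' ∈ t, ∑ e ∈ s, (if e' ∈ Se G e then ‖f e'‖ ^ 2 else 0) := by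
          rw [step1, Finset.sum_comm]
      _ ≤ ∑ e' ∈ t, N * ‖f e'‖ ^ 2 := Finset.sum_le_sum step2
      _ = N * ∑ e' ∈ t, ‖f e'‖ ^ 2 := by rw [Finset.mul_sum]
      _ ≤ N * ‖f‖ ^ 2 := mul_le_mul_of_nonneg_left step3 hN0
  calc ∑ e ∈ s, ‖gmap G (⇑f) e‖ ^ 2
      ≤ ∑ e ∈ s, N * ∑ e' ∈ Se G e, ‖f e'‖ ^ 2 :=
        Finset.sum_le_sum fun e _ => hsq e
    _ = N * ∑ e ∈ s, ∑ e' ∈ Se G e, ‖f e'‖ ^ 2 := by rw [Finset.mul_sum]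
    _ ≤ N * (N * ‖f‖ ^ 2) := mul_le_mul_of_nonneg_left main hN0
    _ = (N * ‖f‖) ^ 2 := by ring

lemma gmap_memℓp {d : ℕ} (hdeg : ∀ v, G.degree v ≤ d)
    (f : lp (fun _ : OrientedEdge G => ℂ) 2) :
    Memℓp (gmap G (⇑f)) 2 := by
  refine memℓp_gen' (C := (((4 * (d - 1) : ℕ) : ℝ) * ‖f‖) ^ 2) ?_
  intro s
  have := key_sum_bound G hdeg f s
  have h2 : ((2 : ℝ≥0∞).toReal) = (2 : ℝ) := by norm_num
  rw [h2]
  have hr : ∀ x : ℝ, x ^ (2:ℝ) = x ^ 2 := fun x => by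
    rw [show (2:ℝ) = ((2:ℕ):ℝ) by norm_num, Real.rpow_natCast]
  simp only [hr]
  exact this

end OEBound

open OEBound in
/-- **Universal `4(d-1)` bound for the oriented-edge adjacency operator.** -/
theorem oriented_edge_adjacency_universal_bound
    (V : Type*) [Countable V] [DecidableEq V]
    (G : SimpleGraph V) [∀ v : V, Fintype (G.neighborSet v)]
    (d : ℕ) (hd : 1 ≤ d) (hdeg : ∀ v : V, G.degree v ≤ d) :
    ∃ A : lp (fun _ : OrientedEdge G => ℂ) 2 →L[ℂ] lp (fun _ : OrientedEdge G => ℂ) 2,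
      (∀ f : lp (fun _ : OrientedEdge G => ℂ) 2, ∀ e : OrientedEdge G,
        Summable (fun e' : OrientedEdge G =>
          (if Sym2.mk e'.1.1 e'.1.2 ≠ Sym2.mk e.1.1 e.1.2 ∧
              (e.1.1 ∈ Sym2.mk e'.1.1 e'.1.2 ∨ e.1.2 ∈ Sym2.mk e'.1.1 e'.1.2) then (1 : ℂ) else 0) * f e')) ∧
      (∀ f : lp (fun _ : OrientedEdge G => ℂ) 2, ∀ e : OrientedEdge G,
        A f e = ∑' e' : OrientedEdge G,
          (if Sym2.mk e'.1.1 e'.1.2 ≠ Sym2.mk e.1.1 e.1.2 ∧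
              (e.1.1 ∈ Sym2.mk e'.1.1 e'.1.2 ∨ e.1.2 ∈ Sym2.mk e'.1.1 e'.1.2) then (1 : ℂ) else 0) * f e') ∧
      ‖A‖ ≤ 4 * ((d : ℝ) - 1) := by
  classical
  -- the kernel vanishes off `Se G e`
  have hker : ∀ (f : lp (fun _ : OrientedEdge G => ℂ) 2) (e : OrientedEdge G),
      ∀ e' : OrientedEdge G, e' ∉ Se G e →
      (if Sym2.mk e'.1.1 e'.1.2 ≠ Sym2.mk e.1.1 e.1.2 ∧
          (e.1.1 ∈ Sym2.mk e'.1.1 e'.1.2 ∨ e.1.2 ∈ Sym2.mk e'.1.1 e'.1.2) then (1 : ℂ) else 0) * f e' = 0 := by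
    intro f e e' he'
    have hc : ¬(Sym2.mk e'.1.1 e'.1.2 ≠ Sym2.mk e.1.1 e.1.2 ∧
        (e.1.1 ∈ Sym2.mk e'.1.1 e'.1.2 ∨ e.1.2 ∈ Sym2.mk e'.1.1 e'.1.2)) :=
      fun hcc => he' ((mem_Se (G:=G)).2 hcc)
    rw [if_neg hc, zero_mul]
  have hNcast : (((4 * (d - 1) : ℕ) : ℝ)) = 4 * ((d : ℝ) - 1) := by
    push_cast [hd]
    ring
  have hN0 : (0:ℝ) ≤ 4 * ((d : ℝ) - 1) := by
    have : (1:ℝ) ≤ (d:ℝ) := by exact_mod_cast hd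
    linarith
  -- the linear map
  let L : lp (fun _ : OrientedEdge G => ℂ) 2 →ₗ[ℂ] lp (fun _ : OrientedEdge G => ℂ) 2 :=
    { toFun := fun f => ⟨gmap G (⇑f), gmap_memℓp G hdeg f⟩
      map_add' := by
        intro f g
        ext e
        simp only [gmap, lp.coeFn_add, Pi.add_apply]
        exact Finset.sum_add_distrib
      map_smul' := by
        intro c f
        ext e
        simp [gmap, lp.coeFn_smul, Finset.mul_sum] }
  have hLf : ∀ (f : lp (fun _ : OrientedEdge G => ℂ) 2) (e : OrientedEdge G),
      L f e = ∑ e' ∈ Se G e, f e' := fun f e => rfl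
  have hbound : ∀ f, ‖L f‖ ≤ 4 * ((d : ℝ) - 1) * ‖f‖ := by
    intro f
    refine lp.norm_le_of_forall_sum_le (by norm_num) (by positivity) (fun s => ?_)
    have key := key_sum_bound G hdeg f s
    rw [hNcast] at key
    have h2 : ((2 : ℝ≥0∞).toReal) = (2 : ℝ) := by norm_num
    rw [h2]
    calc ∑ e ∈ s, ‖L f e‖ ^ (2:ℝ)
        = ∑ e ∈ s, ‖gmap G (⇑f) e‖ ^ 2 := by
          refine Finset.sum_congr rfl fun e _ => ?_
          rw [hLf, show (2:ℝ) = ((2:ℕ):ℝ) by norm_num, Real.rpow_natCast]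
          rfl
      _ ≤ (4 * ((d : ℝ) - 1) * ‖f‖) ^ 2 := key
      _ = (4 * ((d : ℝ) - 1) * ‖f‖) ^ (2:ℝ) := by
          rw [show (2:ℝ) = ((2:ℕ):ℝ) by norm_num, Real.rpow_natCast]
  refine ⟨L.mkContinuous (4 * ((d : ℝ) - 1)) hbound, ?_, ?_, ?_⟩
  · intro f e
    exact summable_of_ne_finset_zero (hker f e)
  · intro f e
    rw [tsum_eq_sum (hker f e)]
    have : ∀ e' ∈ Se G e,
        (if Sym2.mk e'.1.1 e'.1.2 ≠ Sym2.mk e.1.1 e.1.2 ∧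
            (e.1.1 ∈ Sym2.mk e'.1.1 e'.1.2 ∨ e.1.2 ∈ Sym2.mk e'.1.1 e'.1.2) then (1 : ℂ) else 0) * f e'
        = f e' := by
      intro e' he'
      have hcc : Sym2.mk e'.1.1 e'.1.2 ≠ Sym2.mk e.1.1 e.1.2 ∧
          (e.1.1 ∈ Sym2.mk e'.1.1 e'.1.2 ∨ e.1.2 ∈ Sym2.mk e'.1.1 e'.1.2) := (mem_Se (G:=G)).1 he'
      rw [if_pos hcc, one_mul]
    rw [Finset.sum_congr rfl this]
    exact hLf f e
  · exact L.mkContinuous_norm_le hN0 hbound
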